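/- For a real number g with 1 + 12g > 0 and g ≠ 0, set a(g) = (√(1+12g) − 1)/(6g) and m_2(g) = (4·a(g) − a(g)^2)/3. Then lim_{g → (−1/12)^+} √(g + 1/12) · m_2''(g) = 48·√3, where m_2'' denotes the second derivative of m_2 with respect to g. In particular the second derivative of m_2 diverges at the critical point g_c = −1/12 like (g − g_c)^{−1/2}, corresponding to string susceptibility exponent γ = −1/2. -/

import Mathlib

open Filter Topology

/-- The function a(g) of the quartic one-matrix model. -/
noncomputable def quarticA (g : ℝ) : ℝ := (Real.sqrt (1 + 12 * g) - 1) / (6 * g)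

/-- The limiting second moment m₂(g) of the quartic one-matrix model. -/
noncomputable def quarticM2 (g : ℝ) : ℝ := (4 * quarticA g - (quarticA g) ^ 2) / 3

namespace QuarticAux

noncomputable def s (g : ℝ) : ℝ := Real.sqrt (1 + 12 * g)

noncomputable def F (g : ℝ) : ℝ := (4 + 8 * s g) / (3 * (1 + s g) ^ 2)
noncomputable def M (g : ℝ) : ℝ := -16 / (1 + s g) ^ 3
noncomputable def M2 (g : ℝ) : ℝ := 288 / (s g * (1 + s g) ^ 4)

lemma s_nonneg (g : ℝ) : 0 ≤ s g := Real.sqrt_nonneg _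

lemma one_add_s_pos (g : ℝ) : 0 < 1 + s g := by linarith [s_nonneg g]

lemma s_pos {g : ℝ} (h : 0 < 1 + 12 * g) : 0 < s g := Real.sqrt_pos.2 h

lemma s_sq {g : ℝ} (h : 0 < 1 + 12 * g) : s g ^ 2 = 1 + 12 * g :=
  Real.sq_sqrt h.le

lemma hs {g : ℝ} (h : 0 < 1 + 12 * g) : HasDerivAt s (6 / s g) g := by
  have h1 : HasDerivAt (fun x : ℝ => 1 + 12 * x) 12 g := by
    simpa using ((hasDerivAt_id g).const_mul 12).const_add 1
  have h2 := (Real.hasDerivAt_sqrt (ne_of_gt h)).comp g h1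
  have hp := s_pos h
  convert (show HasDerivAt s _ g from h2) using 1
  rw [s]
  field_simp
  ring

lemma quarticA_eq {g : ℝ} (h : 0 < 1 + 12 * g) (hg : g ≠ 0) :
    quarticA g = 2 / (1 + s g) := by
  have hsq := s_sq h
  have hp := one_add_s_pos g
  rw [quarticA]
  rw [div_eq_div_iff (by positivity) (ne_of_gt hp)]
  rw [show Real.sqrt (1 + 12 * g) = s g from rfl]
  linear_combination hsq

lemma quarticM2_eq {g : ℝ} (h : 0 < 1 + 12 * g) (hg : g ≠ 0) :
    quarticM2 g = F g := by
  have hp := one_add_s_pos g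
  rw [quarticM2, quarticA_eq h hg, F]
  field_simp
  ring

lemma hF {g : ℝ} (h : 0 < 1 + 12 * g) : HasDerivAt F (M g) g := by
  have hp := s_pos h
  have hp1 := one_add_s_pos g
  have hnum : HasDerivAt (fun x => 4 + 8 * s x) (8 * (6 / s g)) g :=
    ((hs h).const_mul 8).const_add 4
  have hden : HasDerivAt (fun x => 3 * (1 + s x) ^ 2)
      (3 * (2 * (1 + s g) ^ 1 * (6 / s g))) g :=
    (((hs h).const_add 1).pow 2).const_mul 3
  have := hnum.div hden (by positivity)
  convert (show HasDerivAt F _ g from this) using 1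
  rw [M]
  field_simp
  ring

lemma hM {g : ℝ} (h : 0 < 1 + 12 * g) : HasDerivAt M (M2 g) g := by
  have hp := s_pos h
  have hp1 := one_add_s_pos g
  have hden : HasDerivAt (fun x => (1 + s x) ^ 3)
      (3 * (1 + s g) ^ 2 * (6 / s g)) g :=
    ((hs h).const_add 1).pow 3
  have := (hasDerivAt_const g (-16 : ℝ)).div hden (by positivity)
  convert (show HasDerivAt M _ g from this) using 1
  rw [M2]
  field_simp
  ring

def S : Set ℝ := Set.Ioo (-1 / 12) 0

lemma S_open : IsOpen S := isOpen_Ioo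

lemma mem_pos {g : ℝ} (hg : g ∈ S) : 0 < 1 + 12 * g := by
  have := hg.1; simp only [S, Set.mem_Ioo] at hg; linarith [hg.1]

lemma mem_ne {g : ℝ} (hg : g ∈ S) : g ≠ 0 := ne_of_lt hg.2

lemma deriv1 {g : ℝ} (hg : g ∈ S) : deriv quarticM2 g = M g := by
  have hev : quarticM2 =ᶠ[𝓝 g] F :=
    Filter.eventually_of_mem (S_open.mem_nhds hg)
      (fun x hx => quarticM2_eq (mem_pos hx) (mem_ne hx))
  rw [hev.deriv_eq, (hF (mem_pos hg)).deriv]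

lemma deriv2 {g : ℝ} (hg : g ∈ S) : deriv (deriv quarticM2) g = M2 g := by
  have hev : deriv quarticM2 =ᶠ[𝓝 g] M :=
    Filter.eventually_of_mem (S_open.mem_nhds hg) (fun x hx => deriv1 hx)
  rw [hev.deriv_eq, (hM (mem_pos hg)).deriv]

lemma key_eq {g : ℝ} (hg : g ∈ S) :
    Real.sqrt (g + 1 / 12) * M2 g = 288 / (Real.sqrt 12 * (1 + s g) ^ 4) := by
  have hx : (0 : ℝ) < g + 1 / 12 := by
    have := hg.1; simp only [S, Set.mem_Ioo] at hg; linarith [hg.1]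
  have hsx : s g = Real.sqrt 12 * Real.sqrt (g + 1 / 12) := by
    rw [s, show (1 : ℝ) + 12 * g = 12 * (g + 1 / 12) by ring,
      Real.sqrt_mul (by norm_num)]
  have h12 : (0 : ℝ) < Real.sqrt 12 := Real.sqrt_pos.2 (by norm_num)
  have hxs : (0 : ℝ) < Real.sqrt (g + 1 / 12) := Real.sqrt_pos.2 hx
  have hp1 := one_add_s_pos g
  rw [M2, hsx]
  generalize Real.sqrt (g + 1 / 12) = t at hxs ⊢
  generalize Real.sqrt 12 = w at h12 ⊢
  field_simp

end QuarticAux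

/-- The second derivative of m₂ diverges like (g − g_c)^{−1/2} at the critical
point g_c = −1/12: √(g + 1/12) · m₂''(g) → 48√3 as g → (−1/12)⁺, corresponding
to string susceptibility exponent γ = −1/2. -/
theorem stmt_6 :
    Filter.Tendsto
      (fun g : ℝ => Real.sqrt (g + 1 / 12) * deriv (deriv quarticM2) g)
      (𝓝[>] (-1 / 12))
      (𝓝 (48 * Real.sqrt 3)) := by
  have hS : QuarticAux.S ∈ 𝓝[>] ((-1 : ℝ) / 12) :=
    Ioo_mem_nhdsGT_of_mem (by constructor <;> norm_num)
  have hcong : (fun g : ℝ => 288 / (Real.sqrt 12 * (1 + QuarticAux.s g) ^ 4))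
      =ᶠ[𝓝[>] ((-1 : ℝ) / 12)]
      (fun g : ℝ => Real.sqrt (g + 1 / 12) * deriv (deriv quarticM2) g) := by
    filter_upwards [hS] with g hg
    rw [QuarticAux.deriv2 hg, QuarticAux.key_eq hg]
  apply Filter.Tendsto.congr' hcong
  have hval : (288 : ℝ) / (Real.sqrt 12 * (1 + QuarticAux.s (-1 / 12)) ^ 4)
      = 48 * Real.sqrt 3 := by
    have h1 : QuarticAux.s (-1 / 12) = 0 := by
      rw [QuarticAux.s]; norm_num
    have h2 : Real.sqrt 12 = 2 * Real.sqrt 3 := by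
      rw [show (12 : ℝ) = 2 ^ 2 * 3 by norm_num, Real.sqrt_mul (by positivity),
        Real.sqrt_sq (by norm_num)]
    have h3 : Real.sqrt 3 * Real.sqrt 3 = 3 := Real.mul_self_sqrt (by norm_num)
    rw [h1, h2]
    have h4 : Real.sqrt 3 ≠ 0 := by positivity
    field_simp
    nlinarith [h3]
  rw [← hval]
  have hcont : ContinuousAt
      (fun g : ℝ => 288 / (Real.sqrt 12 * (1 + QuarticAux.s g) ^ 4)) (-1 / 12) := by
    apply ContinuousAt.div continuousAt_const
    · exact (continuousAt_const.mul (((Real.continuous_sqrt.comp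
        (by continuity)).continuousAt).const_add 1 |>.pow 4))
    · have h1 : QuarticAux.s (-1 / 12) = 0 := by
        rw [QuarticAux.s]; norm_num
      rw [h1]
      positivity
  exact hcont.tendsto.mono_left nhdsWithin_le_nhds
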